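/- For every solution of the delayed Hegselmann–Krause system and almost every t > 2τ, the diameter d_x is differentiable at t and satisfies (d/dt) d_x(t) ≤ 2∫_{t−τ}^{t} d_x(s−τ) ds + 2∫_{t−σ}^{t} d_x(s−τ) ds + 2∫_{t−τ}^{t} ∫_{s−τ}^{s} max_{l} |ẋ_l(r)| dr ds + 2∫_{t−σ}^{t} ∫_{s−τ}^{s} max_{l} |ẋ_l(r)| dr ds − N·a̲(t)·d_x(t). -/

import Mathlib

set_option maxHeartbeats 1000000

open scoped BigOperators RealInnerProductSpace
open MeasureTheory

/-- Diameter of the agent configuration at time `t`. -/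
noncomputable def hkDiam {N d : ℕ} (x : Fin N → ℝ → EuclideanSpace ℝ (Fin d)) (t : ℝ) : ℝ :=
  ⨆ i : Fin N, ⨆ j : Fin N, ‖x i t - x j t‖

/-- Maximum of the norms of the derivatives at time `t`. -/
noncomputable def hkMaxDer {N d : ℕ} (x' : Fin N → ℝ → EuclideanSpace ℝ (Fin d)) (t : ℝ) : ℝ :=
  ⨆ i : Fin N, ‖x' i t‖

/-- Minimal communication rate `a̲(t) = min_{i ≠ j} ψ(|x_i(t-σ) - x_j(t-τ)|)/(N-1)`. -/
noncomputable def hkAMin {N d : ℕ} (ψ : ℝ → ℝ) (σ τ : ℝ)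
    (x : Fin N → ℝ → EuclideanSpace ℝ (Fin d)) (t : ℝ) : ℝ :=
  ⨅ p : {p : Fin N × Fin N // p.1 ≠ p.2},
    ψ ‖x p.val.1 (t - σ) - x p.val.2 (t - τ)‖ / (N - 1)

section HKAux

variable {N d : ℕ}

lemma norm_le_hkDiam (x : Fin N → ℝ → EuclideanSpace ℝ (Fin d)) (t : ℝ) (i j : Fin N) :
    ‖x i t - x j t‖ ≤ hkDiam x t := by
  unfold hkDiam
  have h1 : ‖x i t - x j t‖ ≤ ⨆ j : Fin N, ‖x i t - x j t‖ :=
    le_ciSup (f := fun j : Fin N => ‖x i t - x j t‖)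
      (Set.Finite.bddAbove (Set.finite_range _)) j
  exact h1.trans (le_ciSup (f := fun i : Fin N => ⨆ j : Fin N, ‖x i t - x j t‖)
    (Set.Finite.bddAbove (Set.finite_range _)) i)

lemma hkDiam_le (hN : 0 < N) (x : Fin N → ℝ → EuclideanSpace ℝ (Fin d)) (t : ℝ) {c : ℝ}
    (h : ∀ i j, ‖x i t - x j t‖ ≤ c) : hkDiam x t ≤ c := by
  haveI : Nonempty (Fin N) := ⟨⟨0, hN⟩⟩
  exact ciSup_le fun i => ciSup_le fun j => h i j

lemma hkDiam_nonneg (hN : 0 < N) (x : Fin N → ℝ → EuclideanSpace ℝ (Fin d)) (t : ℝ) :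
    0 ≤ hkDiam x t := by
  have := norm_le_hkDiam x t ⟨0, hN⟩ ⟨0, hN⟩
  simpa using this

lemma exists_hkDiam_eq (hN : 0 < N) (x : Fin N → ℝ → EuclideanSpace ℝ (Fin d)) (t : ℝ) :
    ∃ i j, hkDiam x t = ‖x i t - x j t‖ := by
  haveI : Nonempty (Fin N) := ⟨⟨0, hN⟩⟩
  obtain ⟨p, -, hp⟩ := Finset.exists_max_image (Finset.univ : Finset (Fin N × Fin N))
    (fun p => ‖x p.1 t - x p.2 t‖) ⟨(⟨0, hN⟩, ⟨0, hN⟩), Finset.mem_univ _⟩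
  exact ⟨p.1, p.2, le_antisymm (hkDiam_le hN x t fun i j => hp (i, j) (Finset.mem_univ _))
    (norm_le_hkDiam x t p.1 p.2)⟩

lemma norm_le_hkMaxDer (x' : Fin N → ℝ → EuclideanSpace ℝ (Fin d)) (t : ℝ) (i : Fin N) :
    ‖x' i t‖ ≤ hkMaxDer x' t :=
  le_ciSup (f := fun i : Fin N => ‖x' i t‖) (Set.Finite.bddAbove (Set.finite_range _)) i

lemma hkMaxDer_nonneg (hN : 0 < N) (x' : Fin N → ℝ → EuclideanSpace ℝ (Fin d)) (t : ℝ) :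
    0 ≤ hkMaxDer x' t :=
  (norm_nonneg _).trans (norm_le_hkMaxDer x' t ⟨0, hN⟩)

lemma hkMaxDer_le (hN : 0 < N) (x' : Fin N → ℝ → EuclideanSpace ℝ (Fin d)) (t : ℝ) {c : ℝ}
    (h : ∀ i, ‖x' i t‖ ≤ c) : hkMaxDer x' t ≤ c := by
  haveI : Nonempty (Fin N) := ⟨⟨0, hN⟩⟩
  exact ciSup_le h

lemma exists_hkMaxDer_eq (hN : 0 < N) (x' : Fin N → ℝ → EuclideanSpace ℝ (Fin d)) (t : ℝ) :
    ∃ i, hkMaxDer x' t = ‖x' i t‖ := by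
  haveI : Nonempty (Fin N) := ⟨⟨0, hN⟩⟩
  obtain ⟨i, -, hi⟩ := Finset.exists_max_image (Finset.univ : Finset (Fin N))
    (fun i => ‖x' i t‖) ⟨⟨0, hN⟩, Finset.mem_univ _⟩
  exact ⟨i, le_antisymm (hkMaxDer_le hN x' t fun k => hi k (Finset.mem_univ _))
    (norm_le_hkMaxDer x' t i)⟩

lemma hkAMin_le (ψ : ℝ → ℝ) (σ τ : ℝ) (x : Fin N → ℝ → EuclideanSpace ℝ (Fin d)) (t : ℝ)
    {i j : Fin N} (hij : i ≠ j) :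
    hkAMin ψ σ τ x t ≤ ψ ‖x i (t - σ) - x j (t - τ)‖ / (N - 1) := by
  have h := ciInf_le (f := fun p : {p : Fin N × Fin N // p.1 ≠ p.2} =>
      ψ ‖x p.val.1 (t - σ) - x p.val.2 (t - τ)‖ / ((N : ℝ) - 1))
    (Set.Finite.bddBelow (Set.finite_range _)) ⟨(i, j), hij⟩
  exact h

lemma hkAMin_nonneg (hN : 2 ≤ N) (ψ : ℝ → ℝ) (hψ : ∀ s, 0 ≤ s → 0 ≤ ψ s) (σ τ : ℝ)
    (x : Fin N → ℝ → EuclideanSpace ℝ (Fin d)) (t : ℝ) : 0 ≤ hkAMin ψ σ τ x t := by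
  haveI : Nonempty {p : Fin N × Fin N // p.1 ≠ p.2} :=
    ⟨⟨(⟨0, by omega⟩, ⟨1, by omega⟩), by simp [Fin.ext_iff]⟩⟩
  have hN1 : (0:ℝ) ≤ (N:ℝ) - 1 := by
    have : (2:ℝ) ≤ (N:ℝ) := by exact_mod_cast hN
    linarith
  exact le_ciInf fun p => div_nonneg (hψ _ (norm_nonneg _)) hN1

lemma continuousOn_sup' {ι : Type*} (s : Finset ι) (f : ι → ℝ → ℝ) (U : Set ℝ) :
    ∀ (hs : s.Nonempty), (∀ i ∈ s, ContinuousOn (f i) U) →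
      ContinuousOn (fun t => s.sup' hs fun i => f i t) U := by
  induction s using Finset.cons_induction with
  | empty => intro hs; simp at hs
  | cons a s ha ih =>
    intro hs hf
    rcases s.eq_empty_or_nonempty with rfl | hs'
    · simpa using hf a (by simp)
    · have h1 := ih hs' fun i hi => hf i (Finset.mem_cons_of_mem hi)
      have h2 : ContinuousOn (f a) U := hf a (Finset.mem_cons_self _ _)
      refine (h2.sup h1).congr fun t ht => ?_
      rw [Finset.sup'_cons hs']

lemma hkMaxDer_eq_sup' (hN : 0 < N) (x' : Fin N → ℝ → EuclideanSpace ℝ (Fin d)) (t : ℝ)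
    (hs : (Finset.univ : Finset (Fin N)).Nonempty) :
    hkMaxDer x' t = Finset.univ.sup' hs fun i => ‖x' i t‖ := by
  refine le_antisymm (hkMaxDer_le hN x' t fun i =>
    Finset.le_sup' (f := fun i : Fin N => ‖x' i t‖) (Finset.mem_univ i)) ?_
  exact Finset.sup'_le _ _ fun i _ => norm_le_hkMaxDer x' t i

lemma hkDiam_eq_sup' (hN : 0 < N) (x : Fin N → ℝ → EuclideanSpace ℝ (Fin d)) (t : ℝ)
    (hs : (Finset.univ : Finset (Fin N × Fin N)).Nonempty) :
    hkDiam x t = Finset.univ.sup' hs fun p => ‖x p.1 t - x p.2 t‖ := by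
  refine le_antisymm (hkDiam_le hN x t fun i j =>
    Finset.le_sup' (f := fun p : Fin N × Fin N => ‖x p.1 t - x p.2 t‖) (Finset.mem_univ (i, j))) ?_
  exact Finset.sup'_le _ _ fun p _ => norm_le_hkDiam x t p.1 p.2

end HKAux

theorem stmt_3
    (N d : ℕ) (hN : 2 ≤ N) (hd : 1 ≤ d)
    (σ τ : ℝ) (hσ : 0 ≤ σ) (hστ : σ ≤ τ) (hτ : 0 < τ)
    (ψ : ℝ → ℝ)
    (hψpos : ∀ s, 0 ≤ s → 0 < ψ s)
    (hψcont : ContinuousOn ψ (Set.Ici 0))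
    (hψmono : ∀ s t, 0 ≤ s → s ≤ t → ψ t ≤ ψ s)
    (hψbdd : ∀ s, 0 ≤ s → ψ s ≤ 1)
    (x x' : Fin N → ℝ → EuclideanSpace ℝ (Fin d))
    (hxc : ∀ i, ContinuousOn (x i) (Set.Ici (-τ)))
    (hder : ∀ i, ∀ t > (0:ℝ), HasDerivAt (x i) (x' i t) t)
    (hode : ∀ i, ∀ t > (0:ℝ),
      x' i t = ∑ j ∈ Finset.univ.erase i,
        (ψ ‖x i (t - σ) - x j (t - τ)‖ / (N - 1)) • (x j (t - τ) - x i (t - σ))) :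
    ∀ᵐ t ∂(volume : Measure ℝ), t ∈ Set.Ioi (2 * τ) →
      ∃ D : ℝ, HasDerivAt (hkDiam x) D t ∧
        D ≤ 2 * (∫ s in (t - τ)..t, hkDiam x (s - τ))
          + 2 * (∫ s in (t - σ)..t, hkDiam x (s - τ))
          + 2 * (∫ s in (t - τ)..t, ∫ r in (s - τ)..s, hkMaxDer x' r)
          + 2 * (∫ s in (t - σ)..t, ∫ r in (s - τ)..s, hkMaxDer x' r)
          - N * hkAMin ψ σ τ x t * hkDiam x t := by
  have hN0 : 0 < N := by omega
  haveI : Nonempty (Fin N) := ⟨⟨0, hN0⟩⟩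
  have hN2 : (2:ℝ) ≤ (N:ℝ) := by exact_mod_cast hN
  have hNpos : (0:ℝ) < (N:ℝ) - 1 := by linarith
  -- shifted trajectories are continuous on `Ioi 0`
  have hxshift : ∀ c : ℝ, 0 ≤ c → c ≤ τ → ∀ k,
      ContinuousOn (fun t => x k (t - c)) (Set.Ioi 0) := by
    intro c hc hcτ k
    refine (hxc k).comp ((continuous_id.sub continuous_const).continuousOn) ?_
    intro t ht
    simp only [Set.mem_Ioi] at ht
    simp only [Set.mem_Ici, id_eq]
    linarith
  -- `x'` is continuous on `Ioi 0`
  have hx'c : ∀ i, ContinuousOn (x' i) (Set.Ioi 0) := by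
    intro i
    have hF : ContinuousOn (fun t => ∑ j ∈ Finset.univ.erase i,
        (ψ ‖x i (t - σ) - x j (t - τ)‖ / (N - 1)) • (x j (t - τ) - x i (t - σ)))
        (Set.Ioi 0) := by
      apply continuousOn_finset_sum
      intro j _
      have h1 : ContinuousOn (fun t => x i (t - σ)) (Set.Ioi 0) := hxshift σ hσ hστ i
      have h2 : ContinuousOn (fun t => x j (t - τ)) (Set.Ioi 0) := hxshift τ hτ.le le_rfl j
      have hψc : ContinuousOn (fun t => ψ ‖x i (t - σ) - x j (t - τ)‖) (Set.Ioi 0) :=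
        hψcont.comp (h1.sub h2).norm fun t _ => Set.mem_Ici.mpr (norm_nonneg _)
      exact (hψc.div_const _).smul (h2.sub h1)
    exact hF.congr fun t ht => hode i t ht
  -- `hkMaxDer` is continuous on `Ioi 0`
  have hmd : ContinuousOn (hkMaxDer x') (Set.Ioi 0) := by
    have h := continuousOn_sup' (Finset.univ : Finset (Fin N)) (fun i t => ‖x' i t‖)
      (Set.Ioi 0) ⟨⟨0, hN0⟩, Finset.mem_univ _⟩ fun i _ => (hx'c i).norm
    exact h.congr fun t _ => hkMaxDer_eq_sup' hN0 x' t _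
  -- `hkDiam` is continuous on `Ici (-τ)`
  have hdc : ContinuousOn (hkDiam x) (Set.Ici (-τ)) := by
    have h := continuousOn_sup' (Finset.univ : Finset (Fin N × Fin N))
      (fun p t => ‖x p.1 t - x p.2 t‖) (Set.Ici (-τ))
      ⟨(⟨0, hN0⟩, ⟨0, hN0⟩), Finset.mem_univ _⟩
      fun p _ => ((hxc p.1).sub (hxc p.2)).norm
    exact h.congr fun t _ => hkDiam_eq_sup' hN0 x t _
  -- displacement estimate
  have hdisp : ∀ a b : ℝ, 0 < a → a ≤ b → ∀ k,
      ‖x k b - x k a‖ ≤ ∫ s in a..b, hkMaxDer x' s := by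
    intro a b ha hab k
    have hsub : Set.uIcc a b ⊆ Set.Ioi 0 := by
      rw [Set.uIcc_of_le hab]
      intro s hs
      exact lt_of_lt_of_le ha hs.1
    have hint : IntervalIntegrable (x' k) volume a b :=
      ((hx'c k).mono hsub).intervalIntegrable
    have heq : ∫ s in a..b, x' k s = x k b - x k a :=
      intervalIntegral.integral_eq_sub_of_hasDerivAt (fun s hs => hder k s (hsub hs)) hint
    rw [← heq]
    calc ‖∫ s in a..b, x' k s‖ ≤ ∫ s in a..b, ‖x' k s‖ :=
          intervalIntegral.norm_integral_le_integral_norm hab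
      _ ≤ ∫ s in a..b, hkMaxDer x' s := by
          apply intervalIntegral.integral_mono_on hab
            (((hx'c k).norm.mono hsub).intervalIntegrable)
            ((hmd.mono hsub).intervalIntegrable)
          intro s _
          exact norm_le_hkMaxDer x' s k
  -- local Lipschitz bounds for the diameter
  have hlocLip : ∀ a b : ℝ, 0 < a → ∃ K : NNReal, LipschitzOnWith K (hkDiam x) (Set.Icc a b) := by
    intro a b ha
    have hIoi : Set.Icc a b ⊆ Set.Ioi 0 := fun s hs => lt_of_lt_of_le ha hs.1
    obtain ⟨C, hC⟩ := (isCompact_Icc : IsCompact (Set.Icc a b)).exists_bound_of_continuousOn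
      (hmd.mono hIoi)
    set C' := max C 0 with hC'
    have hC'0 : 0 ≤ C' := le_max_right _ _
    have hCb : ∀ s ∈ Set.Icc a b, hkMaxDer x' s ≤ C' := fun s hs =>
      (le_abs_self _).trans ((by simpa [Real.norm_eq_abs] using hC s hs : |hkMaxDer x' s| ≤ C).trans
        (le_max_left _ _))
    have hxiLip : ∀ k, ∀ s₁ ∈ Set.Icc a b, ∀ s₂ ∈ Set.Icc a b,
        ‖x k s₁ - x k s₂‖ ≤ C' * |s₁ - s₂| := by
      intro k s₁ h1 s₂ h2
      have := Convex.norm_image_sub_le_of_norm_hasDerivWithin_le (f := x k) (f' := x' k)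
        (fun s hs => (hder k s (hIoi hs)).hasDerivWithinAt)
        (fun s hs => (norm_le_hkMaxDer x' s k).trans (hCb s hs)) (convex_Icc a b) h2 h1
      simpa [Real.norm_eq_abs] using this
    refine ⟨Real.toNNReal (2 * C'), LipschitzOnWith.of_dist_le_mul ?_⟩
    intro s₁ h1 s₂ h2
    have key : ∀ u ∈ Set.Icc a b, ∀ v ∈ Set.Icc a b,
        hkDiam x u - hkDiam x v ≤ 2 * C' * |u - v| := by
      intro u hu v hv
      obtain ⟨i, j, hij⟩ := exists_hkDiam_eq hN0 x u
      have hdec : x i u - x j u = (x i v - x j v) + ((x i u - x i v) - (x j u - x j v)) := by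
        abel
      have h3 : ‖x i u - x j u‖ ≤ ‖x i v - x j v‖ + (‖x i u - x i v‖ + ‖x j u - x j v‖) := by
        rw [hdec]
        exact (norm_add_le _ _).trans (by gcongr; exact norm_sub_le _ _)
      have h4 := hxiLip i u hu v hv
      have h5 := hxiLip j u hu v hv
      have h6 := norm_le_hkDiam x v i j
      rw [hij]
      linarith
    have habs : |hkDiam x s₁ - hkDiam x s₂| ≤ 2 * C' * |s₁ - s₂| := by
      rw [abs_sub_le_iff]
      refine ⟨key s₁ h1 s₂ h2, ?_⟩
      have := key s₂ h2 s₁ h1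
      rwa [abs_sub_comm] at this
    rw [Real.dist_eq, Real.dist_eq]
    calc |hkDiam x s₁ - hkDiam x s₂| ≤ 2 * C' * |s₁ - s₂| := habs
      _ = (Real.toNNReal (2 * C') : ℝ) * |s₁ - s₂| := by
          rw [Real.coe_toNNReal _ (by linarith)]
  -- a.e. differentiability
  have hae : ∀ n : ℕ, ∀ᵐ t ∂(volume : Measure ℝ),
      t ∈ Set.Ioo (2 * τ + 1 / ((n : ℝ) + 1)) (2 * τ + n) →
        DifferentiableAt ℝ (hkDiam x) t := by
    intro n
    obtain ⟨K, hK⟩ := hlocLip (2 * τ + 1 / ((n : ℝ) + 1)) (2 * τ + n) (by positivity)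
    obtain ⟨g, hg, hfg⟩ := hK.extend_real
    filter_upwards [hg.ae_differentiableAt (μ := volume)] with t ht hmem
    have hnhds : Set.Icc (2 * τ + 1 / ((n : ℝ) + 1)) (2 * τ + n) ∈ nhds t :=
      Icc_mem_nhds hmem.1 hmem.2
    have hev : hkDiam x =ᶠ[nhds t] g := Filter.eventuallyEq_of_mem hnhds hfg
    exact hev.differentiableAt_iff.mpr ht
  have hdiff : ∀ᵐ t ∂(volume : Measure ℝ), t ∈ Set.Ioi (2 * τ) →
      DifferentiableAt ℝ (hkDiam x) t := by
    filter_upwards [MeasureTheory.ae_all_iff.mpr hae] with t ht hmem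
    rw [Set.mem_Ioi] at hmem
    have hpos : 0 < t - 2 * τ := by linarith
    obtain ⟨n, hn⟩ := exists_nat_gt (max (t - 2 * τ) (1 / (t - 2 * τ)))
    have h1 : 1 / (t - 2 * τ) < (n : ℝ) := lt_of_le_of_lt (le_max_right _ _) hn
    have h2 : t - 2 * τ < (n : ℝ) := lt_of_le_of_lt (le_max_left _ _) hn
    have h3 : 1 / ((n : ℝ) + 1) < t - 2 * τ := by
      rw [div_lt_iff₀ (by positivity)]
      rw [div_lt_iff₀ hpos] at h1
      nlinarith
    exact ht n ⟨by linarith, by linarith⟩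
  -- the main pointwise estimate
  filter_upwards [hdiff] with t hdt ht
  rw [Set.mem_Ioi] at ht
  have htpos : (0:ℝ) < t := by linarith
  have htτ : 0 < t - τ := by linarith
  have htσ : 0 < t - σ := by linarith
  have ht2τ : 0 < t - 2 * τ := by linarith
  have hDt := (hdt (Set.mem_Ioi.mpr ht)).hasDerivAt
  refine ⟨deriv (hkDiam x) t, hDt, ?_⟩
  have hIτ0 : 0 ≤ ∫ s in (t - τ)..t, hkMaxDer x' s :=
    intervalIntegral.integral_nonneg (by linarith) fun s _ => hkMaxDer_nonneg hN0 x' s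
  have hIσ0 : 0 ≤ ∫ s in (t - σ)..t, hkMaxDer x' s :=
    intervalIntegral.integral_nonneg (by linarith) fun s _ => hkMaxDer_nonneg hN0 x' s
  -- Step B : derivative bound in terms of integrals of hkMaxDer
  have hB : deriv (hkDiam x) t ≤ 2 * (∫ s in (t - τ)..t, hkMaxDer x' s)
      + 2 * (∫ s in (t - σ)..t, hkMaxDer x' s)
      - N * hkAMin ψ σ τ x t * hkDiam x t := by
    obtain ⟨i, j, hij⟩ := exists_hkDiam_eq hN0 x t
    rcases eq_or_lt_of_le (hkDiam_nonneg hN0 x t) with hdx0 | hdx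
    · have hmin : IsLocalMin (hkDiam x) t :=
        Filter.Eventually.of_forall fun s => by
          rw [← hdx0]; exact hkDiam_nonneg hN0 x s
      have hzero := hmin.hasDerivAt_eq_zero hDt
      rw [hzero, ← hdx0]
      simp only [mul_zero, sub_zero]
      linarith
    · set dxt := hkDiam x t with hdxt
      set u : EuclideanSpace ℝ (Fin d) := dxt⁻¹ • (x i t - x j t) with hu_def
      have hnu : ‖u‖ = 1 := by
        rw [hu_def, norm_smul, norm_inv, Real.norm_eq_abs, abs_of_pos hdx, ← hij]
        field_simp
      have hinneru : ∀ v : EuclideanSpace ℝ (Fin d), ⟪v, u⟫ ≤ ‖v‖ := fun v =>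
        (real_inner_le_norm v u).trans (by rw [hnu, mul_one])
      have hsub_der : HasDerivAt (fun s => x i s - x j s) (x' i t - x' j t) t :=
        (hder i t htpos).sub (hder j t htpos)
      have hφ : HasDerivAt (fun s => ⟪x i s - x j s, u⟫) ⟪x' i t - x' j t, u⟫ t := by
        have := HasDerivAt.inner ℝ hsub_der (hasDerivAt_const t u)
        simpa using this
      have hφt : ⟪x i t - x j t, u⟫ = dxt := by
        rw [hu_def, real_inner_smul_right, real_inner_self_eq_norm_mul_norm, ← hij]
        field_simp
      have hphi_le : ∀ s, ⟪x i s - x j s, u⟫ ≤ hkDiam x s := fun s =>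
        (hinneru _).trans (norm_le_hkDiam x s i j)
      have hmin : IsLocalMin (fun s => hkDiam x s - ⟪x i s - x j s, u⟫) t :=
        Filter.Eventually.of_forall fun s => by
          simp only
          rw [hφt, ← hdxt]
          have := hphi_le s
          linarith
      have hD0 := hmin.hasDerivAt_eq_zero (hDt.sub hφ)
      have hEq : deriv (hkDiam x) t = ⟪x' i t, u⟫ - ⟪x' j t, u⟫ := by
        rw [← inner_sub_left]
        linarith
      -- projections
      set g : Fin N → ℝ := fun k => ⟪x k t, u⟫ with hg
      have hgd : g i - g j = dxt := by
        rw [hg]; simp only [← inner_sub_left]; exact hφt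
      have hgmax : ∀ k, g k ≤ g i := by
        intro k
        have h1 : ⟪x k t - x j t, u⟫ ≤ dxt := by
          have := (hinneru (x k t - x j t)).trans (norm_le_hkDiam x t k j)
          rwa [← hdxt] at this
        rw [inner_sub_left] at h1
        have := hgd
        simp only [hg] at *
        linarith
      have hgmin : ∀ k, g j ≤ g k := by
        intro k
        have h1 : ⟪x i t - x k t, u⟫ ≤ dxt := by
          have := (hinneru (x i t - x k t)).trans (norm_le_hkDiam x t i k)
          rwa [← hdxt] at this
        rw [inner_sub_left] at h1
        have := hgd
        simp only [hg] at *
        linarith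
      have hdispτ : ∀ k, ‖x k t - x k (t - τ)‖ ≤ ∫ s in (t - τ)..t, hkMaxDer x' s :=
        fun k => hdisp (t - τ) t htτ (by linarith) k
      have hdispσ : ∀ k, ‖x k t - x k (t - σ)‖ ≤ ∫ s in (t - σ)..t, hkMaxDer x' s :=
        fun k => hdisp (t - σ) t htσ (by linarith) k
      set Iτ := ∫ s in (t - τ)..t, hkMaxDer x' s with hIτ
      set Iσ := ∫ s in (t - σ)..t, hkMaxDer x' s with hIσ
      set aψ := hkAMin ψ σ τ x t with haψ
      -- bound for i
      have hxi : ⟪x' i t, u⟫ ≤ aψ * (∑ k ∈ Finset.univ.erase i, (g k - g i)) + (Iτ + Iσ) := by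
        rw [hode i t htpos, sum_inner]
        have hterm : ∀ k ∈ Finset.univ.erase i,
            ⟪(ψ ‖x i (t - σ) - x k (t - τ)‖ / ((N : ℝ) - 1)) • (x k (t - τ) - x i (t - σ)), u⟫
              ≤ aψ * (g k - g i) + (Iτ + Iσ) / ((N : ℝ) - 1) := by
          intro k hk
          have hki : k ≠ i := Finset.ne_of_mem_erase hk
          set c := ψ ‖x i (t - σ) - x k (t - τ)‖ / ((N : ℝ) - 1) with hc
          have hc0 : 0 ≤ c := div_nonneg (hψpos _ (norm_nonneg _)).le (by linarith)
          have hcle : c ≤ 1 / ((N : ℝ) - 1) := by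
            rw [hc, div_le_div_iff₀ hNpos hNpos]
            have := hψbdd _ (norm_nonneg (x i (t - σ) - x k (t - τ)))
            nlinarith
          have hamin_le : aψ ≤ c := hkAMin_le ψ σ τ x t hki.symm
          have hdecomp : x k (t - τ) - x i (t - σ)
              = (x k t - x i t) + ((x k (t - τ) - x k t) + (x i t - x i (t - σ))) := by abel
          have hinner_le : ⟪x k (t - τ) - x i (t - σ), u⟫ ≤ (g k - g i) + (Iτ + Iσ) := by
            rw [hdecomp, inner_add_left, inner_add_left]
            have h1 : ⟪x k (t - τ) - x k t, u⟫ ≤ Iτ :=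
              (hinneru _).trans (by rw [norm_sub_rev]; exact hdispτ k)
            have h2 : ⟪x i t - x i (t - σ), u⟫ ≤ Iσ := (hinneru _).trans (hdispσ i)
            have h3 : ⟪x k t - x i t, u⟫ = g k - g i := by rw [inner_sub_left]
            linarith
          rw [real_inner_smul_left]
          calc c * ⟪x k (t - τ) - x i (t - σ), u⟫
              ≤ c * ((g k - g i) + (Iτ + Iσ)) := mul_le_mul_of_nonneg_left hinner_le hc0
            _ = c * (g k - g i) + c * (Iτ + Iσ) := by ring
            _ ≤ aψ * (g k - g i) + (Iτ + Iσ) / ((N : ℝ) - 1) := by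
                have h3 : c * (g k - g i) ≤ aψ * (g k - g i) :=
                  mul_le_mul_of_nonpos_right hamin_le (by linarith [hgmax k])
                have h4 : c * (Iτ + Iσ) ≤ (1 / ((N : ℝ) - 1)) * (Iτ + Iσ) :=
                  mul_le_mul_of_nonneg_right hcle (by linarith)
                have h5 : (1 / ((N : ℝ) - 1)) * (Iτ + Iσ) = (Iτ + Iσ) / ((N : ℝ) - 1) := by
                  ring
                linarith
        calc (∑ k ∈ Finset.univ.erase i,
              ⟪(ψ ‖x i (t - σ) - x k (t - τ)‖ / ((N : ℝ) - 1)) • (x k (t - τ) - x i (t - σ)), u⟫)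
            ≤ ∑ k ∈ Finset.univ.erase i, (aψ * (g k - g i) + (Iτ + Iσ) / ((N : ℝ) - 1)) :=
              Finset.sum_le_sum hterm
          _ = aψ * (∑ k ∈ Finset.univ.erase i, (g k - g i)) + (Iτ + Iσ) := by
              rw [Finset.sum_add_distrib, ← Finset.mul_sum, Finset.sum_const,
                Finset.card_erase_of_mem (Finset.mem_univ i), Finset.card_univ,
                Fintype.card_fin, nsmul_eq_mul, Nat.cast_sub (by omega : 1 ≤ N), Nat.cast_one]
              field_simp
      -- bound for j
      have hxj : -⟪x' j t, u⟫ ≤ aψ * (∑ k ∈ Finset.univ.erase j, (g j - g k)) + (Iτ + Iσ) := by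
        rw [hode j t htpos, sum_inner, ← Finset.sum_neg_distrib]
        have hterm : ∀ k ∈ Finset.univ.erase j,
            -⟪(ψ ‖x j (t - σ) - x k (t - τ)‖ / ((N : ℝ) - 1)) • (x k (t - τ) - x j (t - σ)), u⟫
              ≤ aψ * (g j - g k) + (Iτ + Iσ) / ((N : ℝ) - 1) := by
          intro k hk
          have hkj : k ≠ j := Finset.ne_of_mem_erase hk
          set c := ψ ‖x j (t - σ) - x k (t - τ)‖ / ((N : ℝ) - 1) with hc
          have hc0 : 0 ≤ c := div_nonneg (hψpos _ (norm_nonneg _)).le (by linarith)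
          have hcle : c ≤ 1 / ((N : ℝ) - 1) := by
            rw [hc, div_le_div_iff₀ hNpos hNpos]
            have := hψbdd _ (norm_nonneg (x j (t - σ) - x k (t - τ)))
            nlinarith
          have hamin_le : aψ ≤ c := hkAMin_le ψ σ τ x t hkj.symm
          have hneg : -⟪(ψ ‖x j (t - σ) - x k (t - τ)‖ / ((N : ℝ) - 1))
                • (x k (t - τ) - x j (t - σ)), u⟫
              = c * ⟪x j (t - σ) - x k (t - τ), u⟫ := by
            rw [real_inner_smul_left, ← hc, ← mul_neg, ← inner_neg_left, neg_sub]
          rw [hneg]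
          have hdecomp : x j (t - σ) - x k (t - τ)
              = (x j t - x k t) + ((x j (t - σ) - x j t) + (x k t - x k (t - τ))) := by abel
          have hinner_le : ⟪x j (t - σ) - x k (t - τ), u⟫ ≤ (g j - g k) + (Iτ + Iσ) := by
            rw [hdecomp, inner_add_left, inner_add_left]
            have h1 : ⟪x j (t - σ) - x j t, u⟫ ≤ Iσ :=
              (hinneru _).trans (by rw [norm_sub_rev]; exact hdispσ j)
            have h2 : ⟪x k t - x k (t - τ), u⟫ ≤ Iτ := (hinneru _).trans (hdispτ k)
            have h3 : ⟪x j t - x k t, u⟫ = g j - g k := by rw [inner_sub_left]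
            linarith
          calc c * ⟪x j (t - σ) - x k (t - τ), u⟫
              ≤ c * ((g j - g k) + (Iτ + Iσ)) := mul_le_mul_of_nonneg_left hinner_le hc0
            _ = c * (g j - g k) + c * (Iτ + Iσ) := by ring
            _ ≤ aψ * (g j - g k) + (Iτ + Iσ) / ((N : ℝ) - 1) := by
                have h3 : c * (g j - g k) ≤ aψ * (g j - g k) :=
                  mul_le_mul_of_nonpos_right hamin_le (by linarith [hgmin k])
                have h4 : c * (Iτ + Iσ) ≤ (1 / ((N : ℝ) - 1)) * (Iτ + Iσ) :=
                  mul_le_mul_of_nonneg_right hcle (by linarith)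
                have h5 : (1 / ((N : ℝ) - 1)) * (Iτ + Iσ) = (Iτ + Iσ) / ((N : ℝ) - 1) := by
                  ring
                linarith
        calc (∑ k ∈ Finset.univ.erase j,
              -⟪(ψ ‖x j (t - σ) - x k (t - τ)‖ / ((N : ℝ) - 1)) • (x k (t - τ) - x j (t - σ)), u⟫)
            ≤ ∑ k ∈ Finset.univ.erase j, (aψ * (g j - g k) + (Iτ + Iσ) / ((N : ℝ) - 1)) :=
              Finset.sum_le_sum hterm
          _ = aψ * (∑ k ∈ Finset.univ.erase j, (g j - g k)) + (Iτ + Iσ) := by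
              rw [Finset.sum_add_distrib, ← Finset.mul_sum, Finset.sum_const,
                Finset.card_erase_of_mem (Finset.mem_univ j), Finset.card_univ,
                Fintype.card_fin, nsmul_eq_mul, Nat.cast_sub (by omega : 1 ≤ N), Nat.cast_one]
              field_simp
      -- the sum identity
      have hsum : (∑ k ∈ Finset.univ.erase i, (g k - g i))
          + (∑ k ∈ Finset.univ.erase j, (g j - g k)) = -((N : ℝ) * dxt) := by
        have hcard : ((Finset.univ.erase i).card : ℝ) = (N : ℝ) - 1 := by
          rw [Finset.card_erase_of_mem (Finset.mem_univ i), Finset.card_univ, Fintype.card_fin,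
            Nat.cast_sub (by omega : 1 ≤ N), Nat.cast_one]
        have hcard' : ((Finset.univ.erase j).card : ℝ) = (N : ℝ) - 1 := by
          rw [Finset.card_erase_of_mem (Finset.mem_univ j), Finset.card_univ, Fintype.card_fin,
            Nat.cast_sub (by omega : 1 ≤ N), Nat.cast_one]
        have h1 : ∑ k ∈ Finset.univ.erase i, (g k - g i)
            = ((∑ k, g k) - g i) - ((N : ℝ) - 1) * g i := by
          rw [Finset.sum_sub_distrib, Finset.sum_const, nsmul_eq_mul,
            Finset.sum_erase_eq_sub (Finset.mem_univ i), hcard]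
        have h2 : ∑ k ∈ Finset.univ.erase j, (g j - g k)
            = ((N : ℝ) - 1) * g j - ((∑ k, g k) - g j) := by
          rw [Finset.sum_sub_distrib, Finset.sum_const, nsmul_eq_mul,
            Finset.sum_erase_eq_sub (Finset.mem_univ j), hcard']
        rw [h1, h2]
        linear_combination (-(N : ℝ)) * hgd
      have h5 : aψ * (∑ k ∈ Finset.univ.erase i, (g k - g i))
          + aψ * (∑ k ∈ Finset.univ.erase j, (g j - g k)) = -((N : ℝ) * aψ * dxt) := by
        rw [← mul_add, hsum]; ring
      rw [hEq]
      linarith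
  -- Step C : bound the integrals of hkMaxDer
  have hintK : ∀ a b : ℝ, t - 2 * τ ≤ a → a ≤ b → b ≤ t →
      IntervalIntegrable (hkMaxDer x') volume a b := by
    intro a b h1 h2 h3
    apply (hmd.mono ?_).intervalIntegrable
    rw [Set.uIcc_of_le h2]
    intro s hs
    exact lt_of_lt_of_le ht2τ (le_trans h1 hs.1)
  have hpt : ∀ s ∈ Set.Icc (t - τ) t,
      hkMaxDer x' s ≤ hkDiam x (s - τ) + ∫ r in (s - τ)..s, hkMaxDer x' r := by
    intro s hs
    have hs1 := hs.1
    have hs2 := hs.2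
    have hsτ : 0 < s - τ := by linarith
    have hsσ : s - τ ≤ s - σ := by linarith
    have hG0 : 0 ≤ ∫ r in (s - σ)..s, hkMaxDer x' r :=
      intervalIntegral.integral_nonneg (by linarith) fun r _ => hkMaxDer_nonneg hN0 x' r
    have hsplit := intervalIntegral.integral_add_adjacent_intervals
      (hintK (s - τ) (s - σ) (by linarith) hsσ (by linarith))
      (hintK (s - σ) s (by linarith) (by linarith) (by linarith))
    obtain ⟨l, hl⟩ := exists_hkMaxDer_eq hN0 x' s
    rw [hl, hode l s (by linarith)]
    have hterm : ∀ k ∈ Finset.univ.erase l,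
        ‖(ψ ‖x l (s - σ) - x k (s - τ)‖ / ((N : ℝ) - 1)) • (x k (s - τ) - x l (s - σ))‖
          ≤ (1 / ((N : ℝ) - 1)) * (hkDiam x (s - τ) + ∫ r in (s - τ)..s, hkMaxDer x' r) := by
      intro k _
      set c := ψ ‖x l (s - σ) - x k (s - τ)‖ / ((N : ℝ) - 1) with hc
      have hc0 : 0 ≤ c := div_nonneg (hψpos _ (norm_nonneg _)).le (by linarith)
      have hcle : c ≤ 1 / ((N : ℝ) - 1) := by
        rw [hc, div_le_div_iff₀ hNpos hNpos]
        have := hψbdd _ (norm_nonneg (x l (s - σ) - x k (s - τ)))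
        nlinarith
      have hvb : ‖x k (s - τ) - x l (s - σ)‖
          ≤ hkDiam x (s - τ) + ∫ r in (s - τ)..s, hkMaxDer x' r := by
        have hdec : x k (s - τ) - x l (s - σ)
            = (x k (s - τ) - x l (s - τ)) + (x l (s - τ) - x l (s - σ)) := by abel
        have h1 : ‖x k (s - τ) - x l (s - τ)‖ ≤ hkDiam x (s - τ) := norm_le_hkDiam x (s - τ) k l
        have h2 : ‖x l (s - τ) - x l (s - σ)‖ ≤ ∫ r in (s - τ)..(s - σ), hkMaxDer x' r := by
          rw [norm_sub_rev]
          exact hdisp (s - τ) (s - σ) hsτ hsσ l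
        have h3 : (∫ r in (s - τ)..(s - σ), hkMaxDer x' r) ≤ ∫ r in (s - τ)..s, hkMaxDer x' r := by
          linarith
        calc ‖x k (s - τ) - x l (s - σ)‖
            ≤ ‖x k (s - τ) - x l (s - τ)‖ + ‖x l (s - τ) - x l (s - σ)‖ := by
              rw [hdec]; exact norm_add_le _ _
          _ ≤ hkDiam x (s - τ) + ∫ r in (s - τ)..s, hkMaxDer x' r := by linarith
      rw [norm_smul, Real.norm_eq_abs, abs_of_nonneg hc0]
      exact mul_le_mul hcle hvb (norm_nonneg _) (one_div_nonneg.mpr hNpos.le)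
    calc ‖∑ k ∈ Finset.univ.erase l,
          (ψ ‖x l (s - σ) - x k (s - τ)‖ / ((N : ℝ) - 1)) • (x k (s - τ) - x l (s - σ))‖
        ≤ ∑ k ∈ Finset.univ.erase l,
          ‖(ψ ‖x l (s - σ) - x k (s - τ)‖ / ((N : ℝ) - 1)) • (x k (s - τ) - x l (s - σ))‖ :=
          norm_sum_le _ _
      _ ≤ ∑ _k ∈ Finset.univ.erase l,
          (1 / ((N : ℝ) - 1)) * (hkDiam x (s - τ) + ∫ r in (s - τ)..s, hkMaxDer x' r) :=
          Finset.sum_le_sum hterm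
      _ = hkDiam x (s - τ) + ∫ r in (s - τ)..s, hkMaxDer x' r := by
          rw [Finset.sum_const, Finset.card_erase_of_mem (Finset.mem_univ l), Finset.card_univ,
            Fintype.card_fin, nsmul_eq_mul, Nat.cast_sub (by omega : 1 ≤ N), Nat.cast_one]
          field_simp
  -- continuity of the inner integral
  have hFprim : ContinuousOn (fun s => ∫ r in (t - 2 * τ)..s, hkMaxDer x' r)
      (Set.Icc (t - 2 * τ) t) := by
    have h1 : IntervalIntegrable (hkMaxDer x') volume (t - 2 * τ) t :=
      hintK _ _ le_rfl (by linarith) le_rfl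
    have h2 := intervalIntegral.continuousOn_primitive_interval' h1
      (by rw [Set.uIcc_of_le (by linarith : t - 2 * τ ≤ t)]; exact ⟨le_rfl, by linarith⟩)
    rwa [Set.uIcc_of_le (by linarith : t - 2 * τ ≤ t)] at h2
  have hGcont : ContinuousOn (fun s => ∫ r in (s - τ)..s, hkMaxDer x' r)
      (Set.Icc (t - τ) t) := by
    have hc : ContinuousOn (fun s => (∫ r in (t - 2 * τ)..s, hkMaxDer x' r)
        - ∫ r in (t - 2 * τ)..(s - τ), hkMaxDer x' r) (Set.Icc (t - τ) t) := by
      apply ContinuousOn.sub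
      · exact hFprim.mono fun s hs => ⟨by linarith [hs.1], hs.2⟩
      · exact hFprim.comp ((continuous_id.sub continuous_const).continuousOn)
          fun s hs => ⟨by linarith [hs.1], by linarith [hs.2]⟩
    refine hc.congr fun s hs => ?_
    have := intervalIntegral.integral_add_adjacent_intervals
      (hintK (t - 2 * τ) (s - τ) le_rfl (by linarith [hs.1]) (by linarith [hs.2]))
      (hintK (s - τ) s (by linarith [hs.1]) (by linarith) hs.2)
    linarith
  have hstep : ∀ c : ℝ, 0 ≤ c → c ≤ τ →
      (∫ s in (t - c)..t, hkMaxDer x' s) ≤ (∫ s in (t - c)..t, hkDiam x (s - τ))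
        + ∫ s in (t - c)..t, ∫ r in (s - τ)..s, hkMaxDer x' r := by
    intro c hc0 hcτ
    have hsub : Set.Icc (t - c) t ⊆ Set.Icc (t - τ) t := fun s hs => ⟨by linarith [hs.1], hs.2⟩
    have huIcc : Set.uIcc (t - c) t = Set.Icc (t - c) t := Set.uIcc_of_le (by linarith)
    have hint1 : IntervalIntegrable (hkMaxDer x') volume (t - c) t :=
      hintK _ _ (by linarith) (by linarith) le_rfl
    have hdiam_c : ContinuousOn (fun s => hkDiam x (s - τ)) (Set.Icc (t - c) t) := by
      apply hdc.comp ((continuous_id.sub continuous_const).continuousOn)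
      intro s hs
      have := hs.1
      simp only [Set.mem_Ici, id_eq, Pi.sub_apply]
      linarith
    have hint2 : IntervalIntegrable (fun s => hkDiam x (s - τ)) volume (t - c) t := by
      apply ContinuousOn.intervalIntegrable
      rw [huIcc]; exact hdiam_c
    have hint3 : IntervalIntegrable (fun s => ∫ r in (s - τ)..s, hkMaxDer x' r)
        volume (t - c) t := by
      apply ContinuousOn.intervalIntegrable
      rw [huIcc]; exact hGcont.mono hsub
    have hmono := intervalIntegral.integral_mono_on (by linarith : t - c ≤ t) hint1
      (hint2.add hint3) (fun s hs => hpt s (hsub hs))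
    have hadd := intervalIntegral.integral_add hint2 hint3
    rw [hadd] at hmono
    exact hmono
  have hCτ := hstep τ hτ.le le_rfl
  have hCσ := hstep σ hσ hστ
  linarith
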